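/- Let n = 2m be even with m ≥ 2. Let Q be the vertex set of a regular (m+1)-gon with an edge v_1v_2, and let Q' be the reflection of Q across the line through v_1 and v_2. Then P = Q ∪ Q' has exactly n points, and at least ⌊n/4⌋ distinct distances each occur at least n + 1 times in P. -/

import Mathlib

/-- The point (x, y) in the Euclidean plane. -/
noncomputable def pt (x y : ℝ) : EuclideanSpace ℝ (Fin 2) :=
  (WithLp.equiv 2 (Fin 2 → ℝ)).symm ![x, y]

/-- Vertex `j` of the regular `N`-gon with center `c`, radius `r`, phase `φ`. -/
noncomputable def vtx (c : EuclideanSpace ℝ (Fin 2)) (r φ : ℝ) (N j : ℕ) :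
    EuclideanSpace ℝ (Fin 2) :=
  c + pt (r * Real.cos (2 * Real.pi * j / N + φ)) (r * Real.sin (2 * Real.pi * j / N + φ))

/-- The distance `d` occurs at least `t` times (as unordered pairs) in the point set `P`:
there are at least `2 * t` ordered pairs of distinct points of `P` at distance `d`. -/
def occursAtLeast (P : Set (EuclideanSpace ℝ (Fin 2))) (d : ℝ) (t : ℕ) : Prop :=
  2 * t ≤ {pq : EuclideanSpace ℝ (Fin 2) × EuclideanSpace ℝ (Fin 2) |
      pq.1 ∈ P ∧ pq.2 ∈ P ∧ pq.1 ≠ pq.2 ∧ dist pq.1 pq.2 = d}.ncard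

/-- Rotation of the plane by angle `θ` about the point `a`. -/
noncomputable def rotAbout (a : EuclideanSpace ℝ (Fin 2)) (θ : ℝ)
    (p : EuclideanSpace ℝ (Fin 2)) : EuclideanSpace ℝ (Fin 2) :=
  a + pt (Real.cos θ * (p - a) 0 - Real.sin θ * (p - a) 1)
         (Real.sin θ * (p - a) 0 + Real.cos θ * (p - a) 1)

lemma dist_pt_add (c : EuclideanSpace ℝ (Fin 2)) (x y x' y' : ℝ) :
    dist (c + pt x y) (c + pt x' y') = Real.sqrt ((x - x')^2 + (y - y')^2) := by
  rw [dist_add_left, EuclideanSpace.dist_eq]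
  simp [pt, Fin.sum_univ_two, WithLp.equiv_symm_apply, Real.dist_eq, sq_abs]

lemma pt_zero : pt 0 0 = 0 := by
  ext i
  fin_cases i <;> simp [pt, WithLp.equiv_symm_apply]

lemma dist_vtx_center (c : EuclideanSpace ℝ (Fin 2)) (r φ : ℝ) (N j : ℕ) :
    dist (vtx c r φ N j) c = |r| := by
  have h : dist (vtx c r φ N j) (c + pt 0 0) = |r| := by
    rw [vtx, dist_pt_add,
      show (r * Real.cos (2 * Real.pi * j / N + φ) - 0)^2
          + (r * Real.sin (2 * Real.pi * j / N + φ) - 0)^2 = r^2 by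
        nlinarith [Real.sin_sq_add_cos_sq (2 * Real.pi * j / N + φ)]]
    exact Real.sqrt_sq_eq_abs r
  simpa [pt_zero] using h

lemma dist_vtx_sq (c : EuclideanSpace ℝ (Fin 2)) (r φ : ℝ) (N : ℕ) (a b : ℕ) :
    dist (vtx c r φ N a) (vtx c r φ N b) ^ 2
      = 2 * r ^ 2 * (1 - Real.cos (2 * Real.pi * ((a : ℝ) - b) / N)) := by
  rw [vtx, vtx, dist_pt_add, Real.sq_sqrt (by positivity)]
  have h : 2 * Real.pi * ((a:ℝ) - b) / N
      = (2*Real.pi*a/N + φ) - (2*Real.pi*b/N + φ) := by ring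
  rw [h, Real.cos_sub]
  nlinarith [Real.sin_sq_add_cos_sq (2*Real.pi*a/N + φ), Real.sin_sq_add_cos_sq (2*Real.pi*b/N + φ)]

lemma cos_eq_cos_int_iff (N : ℕ) (hN : 0 < N) (a b : ℤ) :
    Real.cos (2 * Real.pi * a / N) = Real.cos (2 * Real.pi * b / N) ↔
      ((N:ℤ) ∣ a - b ∨ (N:ℤ) ∣ a + b) := by
  have hpi := Real.pi_ne_zero
  have hN0 : (N:ℝ) ≠ 0 := Nat.cast_ne_zero.mpr hN.ne'
  have h2pi : (2 * Real.pi) ≠ 0 := by positivity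
  rw [Real.cos_eq_cos_iff]
  constructor
  · rintro ⟨k, h | h⟩
    · left
      refine ⟨-k, ?_⟩
      field_simp at h
      have hb : (b:ℝ) = ↑k * ↑N + ↑a :=
        mul_left_cancel₀ h2pi (by linear_combination (2 * Real.pi) * h)
      have : (a:ℝ) - b = N * (-k) := by linarith
      exact_mod_cast this
    · right
      refine ⟨k, ?_⟩
      field_simp at h
      have hb : (b:ℝ) = ↑k * ↑N - ↑a :=
        mul_left_cancel₀ h2pi (by linear_combination (2 * Real.pi) * h)
      have : (a:ℝ) + b = N * k := by linarith
      exact_mod_cast this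
  · rintro (⟨t, ht⟩ | ⟨t, ht⟩)
    · refine ⟨-t, Or.inl ?_⟩
      have ht' : (a:ℝ) - b = N * t := by exact_mod_cast ht
      field_simp
      skip
      push_cast
      linear_combination (-1:ℝ) * ht'
    · refine ⟨t, Or.inr ?_⟩
      have ht' : (a:ℝ) + b = N * t := by exact_mod_cast ht
      field_simp
      skip
      linear_combination ht'

set_option linter.unusedTactic false

lemma dist_vtx_eq_iff (c : EuclideanSpace ℝ (Fin 2)) {r : ℝ} (φ : ℝ) (hr : 0 < r)
    {N : ℕ} (hN : 0 < N) (a b a' b' : ℕ) :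
    dist (vtx c r φ N a) (vtx c r φ N b) = dist (vtx c r φ N a') (vtx c r φ N b') ↔
      ((N:ℤ) ∣ ((a:ℤ) - b) - ((a':ℤ) - b') ∨ (N:ℤ) ∣ ((a:ℤ) - b) + ((a':ℤ) - b')) := by
  have h1 : dist (vtx c r φ N a) (vtx c r φ N b) = dist (vtx c r φ N a') (vtx c r φ N b')
      ↔ dist (vtx c r φ N a) (vtx c r φ N b) ^ 2 = dist (vtx c r φ N a') (vtx c r φ N b') ^ 2 :=
    (sq_eq_sq₀ dist_nonneg dist_nonneg).symm
  rw [h1, dist_vtx_sq, dist_vtx_sq]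
  have e1 : (2:ℝ) * Real.pi * ((a:ℝ) - b) / N = 2 * Real.pi * (((a:ℤ) - b : ℤ) : ℝ) / N := by
    push_cast; ring
  have e2 : (2:ℝ) * Real.pi * ((a':ℝ) - b') / N = 2 * Real.pi * (((a':ℤ) - b' : ℤ) : ℝ) / N := by
    push_cast; ring
  rw [e1, e2]
  have hr2 : (2:ℝ) * r ^ 2 ≠ 0 := by positivity
  constructor
  · intro h
    have := mul_left_cancel₀ hr2 h
    have hc : Real.cos (2 * Real.pi * (((a:ℤ) - b : ℤ) : ℝ) / N)
        = Real.cos (2 * Real.pi * (((a':ℤ) - b' : ℤ) : ℝ) / N) := by linarith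
    exact (cos_eq_cos_int_iff N hN _ _).mp hc
  · intro h
    have hc := (cos_eq_cos_int_iff N hN ((a:ℤ) - b) ((a':ℤ) - b')).mpr h
    rw [hc]

theorem rich_distances_even_case (m : ℕ) (hm : 2 ≤ m)
    (c : EuclideanSpace ℝ (Fin 2)) (r φ : ℝ) (hr : 0 < r)
    (σ : EuclideanSpace ℝ (Fin 2) ≃ᵢ EuclideanSpace ℝ (Fin 2))
    (hσ1 : σ (vtx c r φ (m + 1) 1) = vtx c r φ (m + 1) 1)
    (hσ2 : σ (vtx c r φ (m + 1) 2) = vtx c r φ (m + 1) 2)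
    (hinv : ∀ p, σ (σ p) = p) (hne : ∃ p, σ p ≠ p)
    (Q Q' : Set (EuclideanSpace ℝ (Fin 2)))
    (hQ : Q = vtx c r φ (m + 1) '' Set.Icc 1 (m + 1))
    (hQ' : Q' = σ '' Q) :
    (Q ∪ Q').ncard = 2 * m ∧
      ∃ D : Finset ℝ, (2 * m) / 4 ≤ D.card ∧
        ∀ d ∈ D, occursAtLeast (Q ∪ Q') d (2 * m + 1) := by
  classical
  have hN : 0 < m + 1 := Nat.succ_pos m
  set v : ℕ → EuclideanSpace ℝ (Fin 2) := vtx c r φ (m + 1) with hv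
  -- vertex equality criterion
  have hinj : ∀ a b : ℕ, v a = v b ↔ ((m:ℤ)+1) ∣ (a:ℤ) - b := by
    intro a b
    have h := dist_vtx_eq_iff c φ hr hN a b a a
    simp only [sub_self, sub_zero, add_zero, or_self] at h
    constructor
    · intro hab
      have : dist (v a) (v b) = dist (v a) (v a) := by rw [hab]
      have := h.mp this
      exact_mod_cast this
    · intro hab
      have : dist (v a) (v b) = dist (v a) (v a) := h.mpr (by exact_mod_cast hab)
      rw [dist_self] at this
      exact dist_eq_zero.mp this
  have hvne : ∀ a b : ℕ, (a:ℤ) ≠ b → |(a:ℤ) - b| < (m:ℤ)+1 → v a ≠ v b := by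
    intro a b hab habs h
    have hd := (hinj a b).mp h
    have := Int.eq_zero_of_abs_lt_dvd hd habs
    omega
  -- every v j is in Q
  have hmemQ : ∀ j : ℕ, v j ∈ Q := by
    intro j
    rcases Nat.eq_zero_or_pos (j % (m+1)) with h0 | hpos
    · have hdvd : (m+1) ∣ j := Nat.dvd_of_mod_eq_zero h0
      obtain ⟨t, rfl⟩ := hdvd
      have : v ((m+1) * t) = v (m+1) := by
        rw [hinj]
        exact ⟨(t:ℤ) - 1, by push_cast; ring⟩
      rw [hQ, this]
      exact ⟨m+1, by simp, rfl⟩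
    · have : v j = v (j % (m+1)) := by
        rw [hinj]
        refine ⟨(j / (m+1) : ℕ), ?_⟩
        have hmd : ((j % (m+1) : ℕ) : ℤ) + ((m:ℤ)+1) * ((j / (m+1) : ℕ) : ℤ) = (j:ℤ) := by
          exact_mod_cast congrArg (Nat.cast : ℕ → ℤ) (Nat.mod_add_div j (m+1))
        linarith
      rw [hQ, this]
      exact ⟨j % (m+1), Set.mem_Icc.mpr ⟨hpos, (Nat.mod_lt j hN).le.trans (by omega)⟩, rfl⟩
  -- an isometry fixing v1, v2 and some point off their line is the identity
  have hfix : ∀ p, σ p = p → Collinear ℝ ({v 1, v 2, p} : Set _) := by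
    intro p hp
    by_contra hcol
    obtain ⟨q, hq⟩ := hne
    have hmem : ∀ a, σ a = a → a ∈ AffineSubspace.perpBisector (σ q) q := by
      intro a ha
      rw [AffineSubspace.mem_perpBisector_iff_dist_eq]
      calc dist a (σ q) = dist (σ a) (σ q) := by rw [ha]
        _ = dist a q := σ.dist_eq a q
    have hsub3 : ({v 1, v 2, p} : Set _) ⊆ (AffineSubspace.perpBisector (σ q) q : Set _) := by
      rintro x hx
      rcases hx with rfl | rfl | rfl
      · exact hmem _ hσ1
      · exact hmem _ hσ2
      · exact hmem _ hp
    have hvs : vectorSpan ℝ ({v 1, v 2, p} : Set _)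
        ≤ (AffineSubspace.perpBisector (σ q) q).direction := by
      rw [AffineSubspace.direction_eq_vectorSpan]
      exact vectorSpan_mono ℝ hsub3
    have hqne : q -ᵥ σ q ≠ 0 := by
      intro h
      exact hq (vsub_eq_zero_iff_eq.mp h).symm
    have hfr : Module.finrank ℝ (AffineSubspace.perpBisector (σ q) q).direction = 1 := by
      rw [AffineSubspace.direction_perpBisector]
      have h1 : Module.finrank ℝ (ℝ ∙ (q -ᵥ σ q)) = 1 := finrank_span_singleton hqne
      have h2 := Submodule.finrank_add_finrank_orthogonal (𝕜 := ℝ) (ℝ ∙ (q -ᵥ σ q))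
      rw [h1, finrank_euclideanSpace_fin] at h2
      omega
    apply hcol
    rw [collinear_iff_finrank_le_one]
    calc Module.finrank ℝ (vectorSpan ℝ ({v 1, v 2, p} : Set _))
        ≤ Module.finrank ℝ (AffineSubspace.perpBisector (σ q) q).direction :=
          Submodule.finrank_mono hvs
      _ = 1 := hfr
  -- distinct vertices are not collinear with v1, v2 (all on the circle)
  have hnc : ∀ i : ℕ, v i ≠ v 1 → v i ≠ v 2 → ¬ Collinear ℝ ({v 1, v 2, v i} : Set _) := by
    intro i h1 h2 hcol
    have hcos : EuclideanGeometry.Cospherical ({v 1, v 2, v i} : Set _) := by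
      refine ⟨c, |r|, ?_⟩
      rintro x (rfl | rfl | rfl) <;> exact dist_vtx_center c r φ (m+1) _
    have h12 : v 1 ≠ v 2 := hvne 1 2 (by norm_num) (by
      rw [show ((1:ℕ):ℤ) - ((2:ℕ):ℤ) = -1 by norm_num]
      rw [abs_neg, abs_one]
      omega)
    have := hcos.affineIndependent_of_ne h12 h1.symm h2.symm
    rw [affineIndependent_iff_not_collinear_set] at this
    exact this hcol
  -- key: the intersection is contained in {v 1, v 2}
  have hQQ : Q ∩ Q' ⊆ {v 1, v 2} := by
    rintro x ⟨hxQ, hxQ'⟩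
    rw [hQ] at hxQ
    obtain ⟨i, hi, rfl⟩ := hxQ
    rw [hQ'] at hxQ'
    obtain ⟨y, hyQ, hy⟩ := hxQ'
    rw [hQ] at hyQ
    obtain ⟨j, hj, rfl⟩ := hyQ
    rw [Set.mem_Icc] at hi hj
    -- hy : σ (v j) = v i
    have hd1 : dist (v i) (v 1) = dist (v j) (v 1) := by
      conv_lhs => rw [← hy, ← hσ1]
      exact σ.dist_eq _ _
    have hd2 : dist (v i) (v 2) = dist (v j) (v 2) := by
      conv_lhs => rw [← hy, ← hσ2]
      exact σ.dist_eq _ _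
    rw [hv, dist_vtx_eq_iff c φ hr hN] at hd1 hd2
    have hij : (i:ℤ) = j → vtx c r φ (m+1) i ∈ ({v 1, v 2} : Set _) := by
      intro hij
      have hij' : i = j := by exact_mod_cast hij
      subst hij'
      have hfp : σ (v i) = v i := hy
      by_cases hv1 : v i = v 1
      · exact Or.inl hv1
      by_cases hv2 : v i = v 2
      · exact Or.inr hv2
      exact absurd (hfix _ hfp) (hnc i hv1 hv2)
    rcases hd1 with hd1 | hd1
    · apply hij
      have : ((m:ℤ)+1) ∣ (i:ℤ) - j := by
        have h' : ((i:ℤ) - 1) - ((j:ℤ) - 1) = (i:ℤ) - j := by push_cast; ring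
        rw [← h']
        exact_mod_cast hd1
      have := Int.eq_zero_of_abs_lt_dvd this (by rw [abs_lt]; omega)
      omega
    rcases hd2 with hd2 | hd2
    · apply hij
      have : ((m:ℤ)+1) ∣ (i:ℤ) - j := by
        have h' : ((i:ℤ) - 2) - ((j:ℤ) - 2) = (i:ℤ) - j := by push_cast; ring
        rw [← h']
        exact_mod_cast hd2
      have := Int.eq_zero_of_abs_lt_dvd this (by rw [abs_lt]; omega)
      omega
    · exfalso
      have hd1' : ((m:ℤ)+1) ∣ ((i:ℤ) + j - 2) := by
        have h' : ((i:ℤ) - 1) + ((j:ℤ) - 1) = (i:ℤ) + j - 2 := by ring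
        rw [← h']; exact_mod_cast hd1
      have hd2' : ((m:ℤ)+1) ∣ ((i:ℤ) + j - 4) := by
        have h' : ((i:ℤ) - 2) + ((j:ℤ) - 2) = (i:ℤ) + j - 4 := by ring
        rw [← h']; exact_mod_cast hd2
      have h2 : ((m:ℤ)+1) ∣ 2 := by
        have := dvd_sub hd1' hd2'
        simpa using this
      have := Int.le_of_dvd (by norm_num) h2
      omega
  have h12 : v 1 ≠ v 2 := hvne 1 2 (by norm_num) (by
    rw [show ((1:ℕ):ℤ) - ((2:ℕ):ℤ) = -1 by norm_num, abs_neg, abs_one]; omega)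
  have hQfin : Q.Finite := by
    rw [hQ]; exact (Set.finite_Icc _ _).image _
  have hQ'fin : Q'.Finite := by
    rw [hQ']; exact hQfin.image _
  have hvinjOn : Set.InjOn v (Set.Icc 1 (m+1)) := by
    intro a ha b hb hab
    rw [Set.mem_Icc] at ha hb
    have hd := (hinj a b).mp hab
    have := Int.eq_zero_of_abs_lt_dvd hd (by rw [abs_lt]; omega)
    omega
  have hQcard : Q.ncard = m + 1 := by
    rw [hQ, Set.ncard_image_of_injOn hvinjOn, ← Finset.coe_Icc, Set.ncard_coe_finset,
      Nat.card_Icc]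
    omega
  have hQ'card : Q'.ncard = m + 1 := by
    rw [hQ', Set.ncard_image_of_injective _ σ.injective, hQcard]
  have hinter : Q ∩ Q' = {v 1, v 2} := by
    apply Set.Subset.antisymm hQQ
    rintro x (rfl | rfl)
    · exact ⟨hmemQ 1, by rw [hQ']; exact ⟨v 1, hmemQ 1, hσ1⟩⟩
    · exact ⟨hmemQ 2, by rw [hQ']; exact ⟨v 2, hmemQ 2, hσ2⟩⟩
  have hintercard : (Q ∩ Q').ncard = 2 := by
    rw [hinter, Set.ncard_pair h12]
  have hcard : (Q ∪ Q').ncard = 2 * m := by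
    have := Set.ncard_union_add_ncard_inter Q Q' hQfin hQ'fin
    rw [hintercard, hQcard, hQ'card] at this
    omega
  refine ⟨hcard, ⟨(Finset.Icc 1 (m/2)).image (fun k => dist (v k) (v 0)), ?_, ?_⟩⟩
  · -- cardinality of the distance set
    rw [Finset.card_image_of_injOn, Nat.card_Icc]
    · omega
    intro k hk k' hk' hkk'
    simp only [Finset.coe_Icc, Set.mem_Icc] at hk hk'
    rw [hv, dist_vtx_eq_iff c φ hr hN] at hkk'
    rcases hkk' with h | h
    · have h' : ((m:ℤ)+1) ∣ (k:ℤ) - k' := by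
        have e : ((k:ℤ) - ((0:ℕ):ℤ)) - ((k':ℤ) - ((0:ℕ):ℤ)) = (k:ℤ) - k' := by push_cast; ring
        rw [← e]; exact_mod_cast h
      have := Int.eq_zero_of_abs_lt_dvd h' (by rw [abs_lt]; omega)
      omega
    · exfalso
      have h' : ((m:ℤ)+1) ∣ (k:ℤ) + k' := by
        have e : ((k:ℤ) - ((0:ℕ):ℤ)) + ((k':ℤ) - ((0:ℕ):ℤ)) = (k:ℤ) + k' := by push_cast; ring
        rw [← e]; exact_mod_cast h
      have := Int.eq_zero_of_abs_lt_dvd h' (by rw [abs_lt]; omega)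
      omega
  · -- each distance occurs often
    intro d hd
    simp only [Finset.mem_image, Finset.mem_Icc] at hd
    obtain ⟨k, ⟨hk1, hk2⟩, rfl⟩ := hd
    unfold occursAtLeast
    set S : Set (EuclideanSpace ℝ (Fin 2) × EuclideanSpace ℝ (Fin 2)) :=
      {pq | pq.1 ∈ Q ∪ Q' ∧ pq.2 ∈ Q ∪ Q' ∧ pq.1 ≠ pq.2 ∧
        dist pq.1 pq.2 = dist (v k) (v 0)} with hS
    have hSfin : S.Finite := by
      apply Set.Finite.subset ((hQfin.union hQ'fin).prod (hQfin.union hQ'fin))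
      rintro ⟨p, q⟩ ⟨h1, h2, _⟩
      exact ⟨h1, h2⟩
    set Φ : ℕ × Bool → EuclideanSpace ℝ (Fin 2) × EuclideanSpace ℝ (Fin 2) := fun jb =>
      if jb.2 then (v (jb.1+1), v (jb.1+1+k)) else (v (jb.1+1+k), v (jb.1+1)) with hΦ
    have hdk : ∀ j : ℕ, dist (v (j+1)) (v (j+1+k)) = dist (v k) (v 0) := by
      intro j
      rw [hv, dist_vtx_eq_iff c φ hr hN]
      right
      exact ⟨0, by push_cast; ring⟩
    have hnep : ∀ j : ℕ, v (j+1) ≠ v (j+1+k) := by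
      intro j
      apply hvne _ _ (by push_cast; omega)
      rw [abs_lt]
      push_cast
      constructor <;> omega
    have hΦS : ∀ jb : ℕ × Bool, Φ jb ∈ S := by
      rintro ⟨j, b⟩
      rcases b <;>
        simp only [hΦ, if_true, if_false, Bool.false_eq_true, reduceIte] <;>
        refine ⟨Or.inl (hmemQ _), Or.inl (hmemQ _), ?_, ?_⟩
      · exact (hnep j).symm
      · rw [dist_comm]; exact hdk j
      · exact hnep j
      · exact hdk j
    have hσΦS : ∀ jb : ℕ × Bool, Prod.map σ σ (Φ jb) ∈ S := by
      rintro ⟨j, b⟩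
      have hQ'mem : ∀ x, x ∈ Q → σ x ∈ Q' := by
        intro x hx; rw [hQ']; exact ⟨x, hx, rfl⟩
      rcases b <;>
        simp only [hΦ, if_true, if_false, Bool.false_eq_true, reduceIte, Prod.map] <;>
        refine ⟨Or.inr (hQ'mem _ (hmemQ _)), Or.inr (hQ'mem _ (hmemQ _)), ?_, ?_⟩
      · exact fun h => (hnep j).symm (σ.injective h)
      · rw [σ.dist_eq, dist_comm]; exact hdk j
      · exact fun h => hnep j (σ.injective h)
      · rw [σ.dist_eq]; exact hdk j
    have keyj : ∀ j j' : ℕ, v (j+1) = v (j'+1) → j < m+1 → j' < m+1 → j = j' := by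
      intro j j' h hj hj'
      have hd := (hinj _ _).mp h
      have := Int.eq_zero_of_abs_lt_dvd hd (by rw [abs_lt]; push_cast; omega)
      omega
    have keyx : ∀ j j' : ℕ, v (j+1) = v (j'+1+k) → v (j+1+k) = v (j'+1) → False := by
      intro j j' h1 h2
      have d1 := (hinj _ _).mp h1
      have d2 := (hinj _ _).mp h2
      have h3 := dvd_sub d2 d1
      have e : ((j+1+k:ℕ):ℤ) - ((j'+1:ℕ):ℤ) - (((j+1:ℕ):ℤ) - ((j'+1+k:ℕ):ℤ)) = 2*(k:ℤ) := by
        push_cast; ring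
      rw [e] at h3
      have := Int.eq_zero_of_abs_lt_dvd h3 (by rw [abs_lt]; push_cast; omega)
      omega
    have hΦinj : Set.InjOn Φ ((Finset.range (m+1)) ×ˢ (Finset.univ : Finset Bool) : Finset (ℕ × Bool)) := by
      rintro ⟨j, b⟩ hjb ⟨j', b'⟩ hjb' heq
      simp only [Finset.coe_product, Finset.coe_univ, Set.mem_prod, Finset.mem_coe,
        Finset.mem_range, Set.mem_univ, and_true] at hjb hjb'
      rcases b <;> rcases b' <;>
        simp only [hΦ, if_true, if_false, Bool.false_eq_true, reduceIte, Prod.mk.injEq] at heq ⊢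
      · exact ⟨keyj _ _ heq.2 hjb hjb', trivial⟩
      · exact (keyx _ _ heq.2 heq.1).elim
      · exact (keyx _ _ heq.1 heq.2).elim
      · exact ⟨keyj _ _ heq.1 hjb hjb', trivial⟩
    set A : Finset (ℕ × Bool) := (Finset.range (m+1)) ×ˢ (Finset.univ : Finset Bool) with hA
    set T1 : Finset (EuclideanSpace ℝ (Fin 2) × EuclideanSpace ℝ (Fin 2)) :=
      Finset.image Φ A with hT1
    set T2 : Finset (EuclideanSpace ℝ (Fin 2) × EuclideanSpace ℝ (Fin 2)) :=
      Finset.image (Prod.map σ σ ∘ Φ) A with hT2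
    have hAcard : A.card = 2 * (m+1) := by
      rw [hA, Finset.card_product, Finset.card_range, Finset.card_univ, Fintype.card_bool]
      ring
    have hT1card : T1.card = 2 * (m+1) := by
      rw [hT1, Finset.card_image_of_injOn hΦinj, hAcard]
    have hT2card : T2.card = 2 * (m+1) := by
      rw [hT2, Finset.card_image_of_injOn, hAcard]
      exact Set.InjOn.comp
        ((Prod.map_injective.mpr ⟨σ.injective, σ.injective⟩).injOn) hΦinj
        (Set.mapsTo_univ _ _)
    have hT1S : ((T1 ∪ T2 : Finset _) : Set _) ⊆ S := by
      intro x hx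
      simp only [Finset.coe_union, Set.mem_union, Finset.mem_coe, hT1, hT2,
        Finset.mem_image] at hx
      rcases hx with ⟨jb, _, rfl⟩ | ⟨jb, _, rfl⟩
      · exact hΦS jb
      · exact hσΦS jb
    have hT12 : (T1 ∩ T2) ⊆ ({(v 1, v 2), (v 2, v 1)} : Finset _) := by
      intro x hx
      rw [Finset.mem_inter] at hx
      obtain ⟨hx1, hx2⟩ := hx
      rw [hT1, Finset.mem_image] at hx1
      rw [hT2, Finset.mem_image] at hx2
      obtain ⟨⟨j, b⟩, _, hj⟩ := hx1
      obtain ⟨⟨j', b'⟩, _, hj'⟩ := hx2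
      have hxQ : x.1 ∈ Q ∧ x.2 ∈ Q := by
        rw [← hj]
        rcases b <;> simp only [hΦ, if_true, if_false, Bool.false_eq_true, reduceIte] <;>
          exact ⟨hmemQ _, hmemQ _⟩
      have hxQ' : x.1 ∈ Q' ∧ x.2 ∈ Q' := by
        rw [← hj']
        have hQ'mem : ∀ y, y ∈ Q → σ y ∈ Q' := by
          intro y hy; rw [hQ']; exact ⟨y, hy, rfl⟩
        rcases b' <;> simp only [hΦ, if_true, if_false, Bool.false_eq_true, reduceIte,
          Function.comp, Prod.map] <;> exact ⟨hQ'mem _ (hmemQ _), hQ'mem _ (hmemQ _)⟩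
      have hxe : x.1 ≠ x.2 := by
        rw [← hj]
        rcases b <;> simp only [hΦ, if_true, if_false, Bool.false_eq_true, reduceIte]
        · exact (hnep j).symm
        · exact hnep j
      have h1 : x.1 ∈ ({v 1, v 2} : Set _) := hQQ ⟨hxQ.1, hxQ'.1⟩
      have h2 : x.2 ∈ ({v 1, v 2} : Set _) := hQQ ⟨hxQ.2, hxQ'.2⟩
      simp only [Finset.mem_insert, Finset.mem_singleton]
      rcases h1 with h1 | h1 <;> rcases h2 with h2 | h2
      · exact absurd (h1.trans h2.symm) hxe
      · left; rw [← h1, ← h2]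
      · right; rw [← h1, ← h2]
      · exact absurd (h1.trans h2.symm) hxe
    have hT12card : (T1 ∩ T2).card ≤ 2 := by
      refine (Finset.card_le_card hT12).trans ?_
      refine (Finset.card_insert_le _ _).trans ?_
      simp
    have hucard := Finset.card_union_add_card_inter T1 T2
    have hS1 : ((T1 ∪ T2 : Finset _) : Set _).ncard ≤ S.ncard :=
      Set.ncard_le_ncard hT1S hSfin
    rw [Set.ncard_coe_finset] at hS1
    omega
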